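/- Let w : ℝ² → ℝ be a polynomial of degree at most 3 in each of the two variables separately (a bicubic, i.e. Q₃, polynomial). Then for every (x₁,x₂) ∈ ℝ², w(x₁,x₂) = Σ_{α,β ∈ {0,1}²} (∂₁^{α₁} ∂₂^{α₂} w)(β₁,β₂) · B̂_{α,β}(x₁,x₂), where B̂_{α,β}(x₁,x₂) = Ĥ_{α₁β₁}(x₁) Ĥ_{α₂β₂}(x₂) with Ĥ₀₀(t) = (2t+1)(t−1)², Ĥ₁₀(t) = t(t−1)², Ĥ₀₁(t) = t²(3−2t), Ĥ₁₁(t) = t²(t−1). -/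
import Mathlib


/-- The cubic Hermite spline `Ĥ_{αβ}`, `α, β ∈ {0,1}`. -/
noncomputable def hermite (α β : Fin 2) : ℝ → ℝ :=
  if α = 0 then
    (if β = 0 then fun t => (2 * t + 1) * (t - 1) ^ 2 else fun t => t ^ 2 * (3 - 2 * t))
  else
    (if β = 0 then fun t => t * (t - 1) ^ 2 else fun t => t ^ 2 * (t - 1))

/-- The Bogner-Fox-Schmit reference shape function
`B̂_{α,β}(x₁,x₂) = Ĥ_{α₁β₁}(x₁) Ĥ_{α₂β₂}(x₂)`. -/
noncomputable def bfs (α β : Fin 2 × Fin 2) : ℝ → ℝ → ℝ :=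
  fun x₁ x₂ => hermite α.1 β.1 x₁ * hermite α.2 β.2 x₂

open MvPolynomial

lemma pderiv_ofNat (i : Fin 2) (n : ℕ) [n.AtLeastTwo] :
    pderiv i (OfNat.ofNat n : MvPolynomial (Fin 2) ℝ) = 0 := by
  rw [← map_ofNat (C : ℝ →+* MvPolynomial (Fin 2) ℝ) n, pderiv_C]

lemma iter_pderiv_sum (i : Fin 2) (n : ℕ) (s : Finset (Fin 2 →₀ ℕ))
    (f : (Fin 2 →₀ ℕ) → MvPolynomial (Fin 2) ℝ) :
    (fun p => pderiv i p)^[n] (∑ d ∈ s, f d) = ∑ d ∈ s, (fun p => pderiv i p)^[n] (f d) := by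
  induction n with
  | zero => simp
  | succ n ih => simp [Function.iterate_succ_apply', ih, map_sum]

lemma mono_eq (d : Fin 2 →₀ ℕ) (c : ℝ) :
    (monomial d c : MvPolynomial (Fin 2) ℝ) = C c * X 0 ^ (d 0) * X 1 ^ (d 1) := by
  rw [monomial_eq, Finsupp.prod_fintype _ _ (fun i => pow_zero _), Fin.prod_univ_two, mul_assoc]

set_option maxHeartbeats 2000000 in
lemma mono_case (c : ℝ) (i j : ℕ) (hi : i ≤ 3) (hj : j ≤ 3) (x₁ x₂ : ℝ) :
    MvPolynomial.eval (fun k : Fin 2 => if k = 0 then x₁ else x₂) (C c * X 0 ^ i * X 1 ^ j) =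
      ∑ α : Fin 2 × Fin 2, ∑ β : Fin 2 × Fin 2,
        MvPolynomial.eval (fun k : Fin 2 => if k = 0 then (β.1 : ℝ) else (β.2 : ℝ))
          ((fun p => MvPolynomial.pderiv (0 : Fin 2) p)^[(α.1 : ℕ)]
            ((fun p => MvPolynomial.pderiv (1 : Fin 2) p)^[(α.2 : ℕ)] (C c * X 0 ^ i * X 1 ^ j))) *
          bfs α β x₁ x₂ := by
  simp only [Fintype.sum_prod_type, Fin.sum_univ_two, Fin.val_zero, Fin.val_one,
    Function.iterate_one, Function.iterate_zero, id_eq]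
  interval_cases i <;> interval_cases j <;>
    simp [bfs, hermite, Derivation.leibniz, Derivation.leibniz_pow, pderiv_X] <;>
    repeat' rw [pderiv_ofNat]
  all_goals try simp
  all_goals ring


/-- BFS interpolation reproduces bicubic (`Q₃`) polynomials: if `w` is a real polynomial
in two variables of degree at most `3` in each variable separately, then for every
`(x₁,x₂)`, `w(x₁,x₂) = Σ_{α,β ∈ {0,1}²} (∂₁^{α₁}∂₂^{α₂} w)(β₁,β₂) · B̂_{α,β}(x₁,x₂)`. -/
theorem bfs_reproduces_bicubics (w : MvPolynomial (Fin 2) ℝ)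
    (hw : ∀ i : Fin 2, w.degreeOf i ≤ 3) :
    ∀ x₁ x₂ : ℝ,
      MvPolynomial.eval (fun i => if i = 0 then x₁ else x₂) w =
      ∑ α : Fin 2 × Fin 2, ∑ β : Fin 2 × Fin 2,
        MvPolynomial.eval (fun i => if i = 0 then (β.1 : ℝ) else (β.2 : ℝ))
          ((fun p => MvPolynomial.pderiv (0 : Fin 2) p)^[(α.1 : ℕ)]
            ((fun p => MvPolynomial.pderiv (1 : Fin 2) p)^[(α.2 : ℕ)] w)) *
          bfs α β x₁ x₂ := by
  intro x₁ x₂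
  have key : ∀ d ∈ w.support,
      MvPolynomial.eval (fun k : Fin 2 => if k = 0 then x₁ else x₂) (monomial d (coeff d w)) =
      ∑ α : Fin 2 × Fin 2, ∑ β : Fin 2 × Fin 2,
        MvPolynomial.eval (fun k : Fin 2 => if k = 0 then (β.1 : ℝ) else (β.2 : ℝ))
          ((fun p => MvPolynomial.pderiv (0 : Fin 2) p)^[(α.1 : ℕ)]
            ((fun p => MvPolynomial.pderiv (1 : Fin 2) p)^[(α.2 : ℕ)] (monomial d (coeff d w)))) *
          bfs α β x₁ x₂ := by
    intro d hd
    have h0 : d 0 ≤ 3 := le_trans (monomial_le_degreeOf 0 hd) (hw 0)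
    have h1 : d 1 ≤ 3 := le_trans (monomial_le_degreeOf 1 hd) (hw 1)
    rw [mono_eq]
    exact mono_case _ _ _ h0 h1 x₁ x₂
  calc MvPolynomial.eval (fun i => if i = 0 then x₁ else x₂) w
      = ∑ d ∈ w.support,
          MvPolynomial.eval (fun k : Fin 2 => if k = 0 then x₁ else x₂)
            (monomial d (coeff d w)) := by
        rw [← map_sum, support_sum_monomial_coeff]
    _ = ∑ d ∈ w.support, ∑ α : Fin 2 × Fin 2, ∑ β : Fin 2 × Fin 2,
          MvPolynomial.eval (fun k : Fin 2 => if k = 0 then (β.1 : ℝ) else (β.2 : ℝ))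
            ((fun p => MvPolynomial.pderiv (0 : Fin 2) p)^[(α.1 : ℕ)]
              ((fun p => MvPolynomial.pderiv (1 : Fin 2) p)^[(α.2 : ℕ)] (monomial d (coeff d w)))) *
            bfs α β x₁ x₂ := Finset.sum_congr rfl key
    _ = ∑ α : Fin 2 × Fin 2, ∑ β : Fin 2 × Fin 2, ∑ d ∈ w.support,
          MvPolynomial.eval (fun k : Fin 2 => if k = 0 then (β.1 : ℝ) else (β.2 : ℝ))
            ((fun p => MvPolynomial.pderiv (0 : Fin 2) p)^[(α.1 : ℕ)]
              ((fun p => MvPolynomial.pderiv (1 : Fin 2) p)^[(α.2 : ℕ)] (monomial d (coeff d w)))) *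
            bfs α β x₁ x₂ := by
        rw [Finset.sum_comm]
        exact Finset.sum_congr rfl fun α _ => Finset.sum_comm
    _ = _ := by
        simp only [← Finset.sum_mul, ← map_sum, ← iter_pderiv_sum, support_sum_monomial_coeff]
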